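/- The value V(π/√3) = 2π ∫₀^{π/√3} ∫_{−π/2}^{π/2} τ · sin(τ cos v) dv dτ satisfies 20.0023 < V(π/√3) < 20.0024. (This is the volume Vol(B(R₄)) ≈ 20.00238509 of the ball of radius R₄ = π/√3 ≈ 1.81379936 of the optimal multiply transitive packing in equation (2.12) of the paper.) -/

import Mathlib

open Real

/-- The volume of the geodesic ball of radius `ρ` in `S² × ℝ` geometry
(Theorem 2.4 of the paper). -/
noncomputable def ballVol (ρ : ℝ) : ℝ :=
  2 * π * ∫ τ in (0 : ℝ)..ρ, ∫ v in (-(π / 2))..(π / 2), τ * Real.sin (τ * Real.cos v)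

section Taylor

open intervalIntegral MeasureTheory

/-- FTC helper on `0..x`. -/
lemma ftc0 {F f : ℝ → ℝ} (x : ℝ) (hF : ∀ t, HasDerivAt F (f t) t) (hf : Continuous f) :
    ∫ t in (0:ℝ)..x, f t = F x - F 0 :=
  intervalIntegral.integral_eq_sub_of_hasDerivAt (fun t _ => hF t) (hf.intervalIntegrable 0 x)

lemma sin_step_lo {C S : ℝ → ℝ} (hC : Continuous C)
    (hd : ∀ t, HasDerivAt S (C t) t) (hS0 : S 0 = 0)
    (h : ∀ t, 0 ≤ t → C t ≤ Real.cos t) {x : ℝ} (hx : 0 ≤ x) : S x ≤ Real.sin x := by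
  have h1 : ∫ t in (0:ℝ)..x, C t ≤ ∫ t in (0:ℝ)..x, Real.cos t := by
    apply intervalIntegral.integral_mono_on hx (hC.intervalIntegrable 0 x)
      (Real.continuous_cos.intervalIntegrable 0 x)
    exact fun t ht => h t ht.1
  rw [integral_cos, Real.sin_zero, sub_zero, ftc0 x hd hC, hS0, sub_zero] at h1
  exact h1

lemma sin_step_hi {C S : ℝ → ℝ} (hC : Continuous C)
    (hd : ∀ t, HasDerivAt S (C t) t) (hS0 : S 0 = 0)
    (h : ∀ t, 0 ≤ t → Real.cos t ≤ C t) {x : ℝ} (hx : 0 ≤ x) : Real.sin x ≤ S x := by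
  have h1 : ∫ t in (0:ℝ)..x, Real.cos t ≤ ∫ t in (0:ℝ)..x, C t := by
    apply intervalIntegral.integral_mono_on hx (Real.continuous_cos.intervalIntegrable 0 x)
      (hC.intervalIntegrable 0 x)
    exact fun t ht => h t ht.1
  rw [integral_cos, Real.sin_zero, sub_zero, ftc0 x hd hC, hS0, sub_zero] at h1
  exact h1

lemma cos_step_hi {S T : ℝ → ℝ} (hS : Continuous S)
    (hd : ∀ t, HasDerivAt T (S t) t) (hT0 : T 0 = 0)
    (h : ∀ t, 0 ≤ t → S t ≤ Real.sin t) {x : ℝ} (hx : 0 ≤ x) : Real.cos x ≤ 1 - T x := by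
  have h1 : ∫ t in (0:ℝ)..x, S t ≤ ∫ t in (0:ℝ)..x, Real.sin t := by
    apply intervalIntegral.integral_mono_on hx (hS.intervalIntegrable 0 x)
      (Real.continuous_sin.intervalIntegrable 0 x)
    exact fun t ht => h t ht.1
  rw [integral_sin, Real.cos_zero, ftc0 x hd hS, hT0, sub_zero] at h1
  linarith

lemma cos_step_lo {S T : ℝ → ℝ} (hS : Continuous S)
    (hd : ∀ t, HasDerivAt T (S t) t) (hT0 : T 0 = 0)
    (h : ∀ t, 0 ≤ t → Real.sin t ≤ S t) {x : ℝ} (hx : 0 ≤ x) : 1 - T x ≤ Real.cos x := by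
  have h1 : ∫ t in (0:ℝ)..x, Real.sin t ≤ ∫ t in (0:ℝ)..x, S t := by
    apply intervalIntegral.integral_mono_on hx (Real.continuous_sin.intervalIntegrable 0 x)
      (hS.intervalIntegrable 0 x)
    exact fun t ht => h t ht.1
  rw [integral_sin, Real.cos_zero, ftc0 x hd hS, hT0, sub_zero] at h1
  linarith

lemma tay_s3 {x : ℝ} (hx : 0 ≤ x) : x - x^3/6 ≤ Real.sin x := by
  refine sin_step_lo (C := fun t => 1 - t^2/2) (S := fun y => y - y^3/6)
    (by fun_prop) (fun t => ?_) (by norm_num)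
    (fun t _ => Real.one_sub_sq_div_two_le_cos) hx
  have h := (hasDerivAt_id t).sub ((hasDerivAt_pow 3 t).div_const 6)
  exact h.congr_deriv (by push_cast; norm_num; ring)

lemma tay_c4 {x : ℝ} (hx : 0 ≤ x) : Real.cos x ≤ 1 - x^2/2 + x^4/24 := by
  have h := cos_step_hi (S := fun y => y - y^3/6) (T := fun y => y^2/2 - y^4/24)
    (by fun_prop) (fun t => ?_) (by norm_num) (fun t ht => tay_s3 ht) hx
  · linarith
  have h := ((hasDerivAt_pow 2 t).div_const 2).sub ((hasDerivAt_pow 4 t).div_const 24)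
  exact h.congr_deriv (by push_cast; norm_num; ring)

lemma tay_s5 {x : ℝ} (hx : 0 ≤ x) : Real.sin x ≤ x - x^3/6 + x^5/120 := by
  refine sin_step_hi (C := fun t => 1 - t^2/2 + t^4/24)
    (S := fun y => y - y^3/6 + y^5/120)
    (by fun_prop) (fun t => ?_) (by norm_num) (fun t ht => tay_c4 ht) hx
  have h := ((hasDerivAt_id t).sub ((hasDerivAt_pow 3 t).div_const 6)).add
    ((hasDerivAt_pow 5 t).div_const 120)
  exact h.congr_deriv (by push_cast; norm_num; ring)

lemma tay_c6 {x : ℝ} (hx : 0 ≤ x) :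
    1 - x^2/2 + x^4/24 - x^6/720 ≤ Real.cos x := by
  have h := cos_step_lo (S := fun y => y - y^3/6 + y^5/120)
    (T := fun y => y^2/2 - y^4/24 + y^6/720)
    (by fun_prop) (fun t => ?_) (by norm_num) (fun t ht => tay_s5 ht) hx
  · linarith
  have h := (((hasDerivAt_pow 2 t).div_const 2).sub ((hasDerivAt_pow 4 t).div_const 24)).add
    ((hasDerivAt_pow 6 t).div_const 720)
  exact h.congr_deriv (by push_cast; norm_num; ring)

lemma tay_s7 {x : ℝ} (hx : 0 ≤ x) :
    x - x^3/6 + x^5/120 - x^7/5040 ≤ Real.sin x := by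
  refine sin_step_lo (C := fun t => 1 - t^2/2 + t^4/24 - t^6/720)
    (S := fun y => y - y^3/6 + y^5/120 - y^7/5040)
    (by fun_prop) (fun t => ?_) (by norm_num) (fun t ht => tay_c6 ht) hx
  have h := (((hasDerivAt_id t).sub ((hasDerivAt_pow 3 t).div_const 6)).add
    ((hasDerivAt_pow 5 t).div_const 120)).sub ((hasDerivAt_pow 7 t).div_const 5040)
  exact h.congr_deriv (by push_cast; norm_num; ring)

lemma tay_c8 {x : ℝ} (hx : 0 ≤ x) :
    Real.cos x ≤ 1 - x^2/2 + x^4/24 - x^6/720 + x^8/40320 := by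
  have h := cos_step_hi (S := fun y => y - y^3/6 + y^5/120 - y^7/5040)
    (T := fun y => y^2/2 - y^4/24 + y^6/720 - y^8/40320)
    (by fun_prop) (fun t => ?_) (by norm_num) (fun t ht => tay_s7 ht) hx
  · linarith
  have h := ((((hasDerivAt_pow 2 t).div_const 2).sub ((hasDerivAt_pow 4 t).div_const 24)).add
    ((hasDerivAt_pow 6 t).div_const 720)).sub ((hasDerivAt_pow 8 t).div_const 40320)
  exact h.congr_deriv (by push_cast; norm_num; ring)

lemma tay_s9 {x : ℝ} (hx : 0 ≤ x) :
    Real.sin x ≤ x - x^3/6 + x^5/120 - x^7/5040 + x^9/362880 := by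
  refine sin_step_hi (C := fun t => 1 - t^2/2 + t^4/24 - t^6/720 + t^8/40320)
    (S := fun y => y - y^3/6 + y^5/120 - y^7/5040 + y^9/362880)
    (by fun_prop) (fun t => ?_) (by norm_num) (fun t ht => tay_c8 ht) hx
  have h := ((((hasDerivAt_id t).sub ((hasDerivAt_pow 3 t).div_const 6)).add
    ((hasDerivAt_pow 5 t).div_const 120)).sub ((hasDerivAt_pow 7 t).div_const 5040)).add
    ((hasDerivAt_pow 9 t).div_const 362880)
  exact h.congr_deriv (by push_cast; norm_num; ring)

lemma tay_c10 {x : ℝ} (hx : 0 ≤ x) :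
    1 - x^2/2 + x^4/24 - x^6/720 + x^8/40320 - x^10/3628800 ≤ Real.cos x := by
  have h := cos_step_lo (S := fun y => y - y^3/6 + y^5/120 - y^7/5040 + y^9/362880)
    (T := fun y => y^2/2 - y^4/24 + y^6/720 - y^8/40320 + y^10/3628800)
    (by fun_prop) (fun t => ?_) (by norm_num) (fun t ht => tay_s9 ht) hx
  · linarith
  have h := (((((hasDerivAt_pow 2 t).div_const 2).sub ((hasDerivAt_pow 4 t).div_const 24)).add
    ((hasDerivAt_pow 6 t).div_const 720)).sub ((hasDerivAt_pow 8 t).div_const 40320)).add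
    ((hasDerivAt_pow 10 t).div_const 3628800)
  exact h.congr_deriv (by push_cast; norm_num; ring)

lemma tay_s11 {x : ℝ} (hx : 0 ≤ x) :
    x - x^3/6 + x^5/120 - x^7/5040 + x^9/362880 - x^11/39916800 ≤ Real.sin x := by
  refine sin_step_lo
    (C := fun t => 1 - t^2/2 + t^4/24 - t^6/720 + t^8/40320 - t^10/3628800)
    (S := fun y => y - y^3/6 + y^5/120 - y^7/5040 + y^9/362880 - y^11/39916800)
    (by fun_prop) (fun t => ?_) (by norm_num) (fun t ht => tay_c10 ht) hx
  have h := (((((hasDerivAt_id t).sub ((hasDerivAt_pow 3 t).div_const 6)).add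
    ((hasDerivAt_pow 5 t).div_const 120)).sub ((hasDerivAt_pow 7 t).div_const 5040)).add
    ((hasDerivAt_pow 9 t).div_const 362880)).sub ((hasDerivAt_pow 11 t).div_const 39916800)
  exact h.congr_deriv (by push_cast; norm_num; ring)

lemma tay_c12 {x : ℝ} (hx : 0 ≤ x) :
    Real.cos x ≤ 1 - x^2/2 + x^4/24 - x^6/720 + x^8/40320 - x^10/3628800 + x^12/479001600 := by
  have h := cos_step_hi
    (S := fun y => y - y^3/6 + y^5/120 - y^7/5040 + y^9/362880 - y^11/39916800)
    (T := fun y => y^2/2 - y^4/24 + y^6/720 - y^8/40320 + y^10/3628800 - y^12/479001600)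
    (by fun_prop) (fun t => ?_) (by norm_num) (fun t ht => tay_s11 ht) hx
  · linarith
  have h := ((((((hasDerivAt_pow 2 t).div_const 2).sub ((hasDerivAt_pow 4 t).div_const 24)).add
    ((hasDerivAt_pow 6 t).div_const 720)).sub ((hasDerivAt_pow 8 t).div_const 40320)).add
    ((hasDerivAt_pow 10 t).div_const 3628800)).sub ((hasDerivAt_pow 12 t).div_const 479001600)
  exact h.congr_deriv (by push_cast; norm_num; ring)

lemma tay_s13 {x : ℝ} (hx : 0 ≤ x) :
    Real.sin x ≤ x - x^3/6 + x^5/120 - x^7/5040 + x^9/362880 - x^11/39916800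
      + x^13/6227020800 := by
  refine sin_step_hi
    (C := fun t => 1 - t^2/2 + t^4/24 - t^6/720 + t^8/40320 - t^10/3628800 + t^12/479001600)
    (S := fun y => y - y^3/6 + y^5/120 - y^7/5040 + y^9/362880 - y^11/39916800
      + y^13/6227020800)
    (by fun_prop) (fun t => ?_) (by norm_num) (fun t ht => tay_c12 ht) hx
  have h := ((((((hasDerivAt_id t).sub ((hasDerivAt_pow 3 t).div_const 6)).add
    ((hasDerivAt_pow 5 t).div_const 120)).sub ((hasDerivAt_pow 7 t).div_const 5040)).add
    ((hasDerivAt_pow 9 t).div_const 362880)).sub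
    ((hasDerivAt_pow 11 t).div_const 39916800)).add
    ((hasDerivAt_pow 13 t).div_const 6227020800)
  exact h.congr_deriv (by push_cast; norm_num; ring)

end Taylor

section Wallis

open intervalIntegral MeasureTheory

lemma wal1 : ∫ v in (-(π/2))..(π/2), Real.cos v = 2 := by
  rw [integral_cos]; norm_num

lemma wal3 : ∫ v in (-(π/2))..(π/2), Real.cos v ^ 3 = 4/3 := by
  have h := integral_cos_pow (a := -(π/2)) (b := π/2) 1
  simp only [Real.cos_pi_div_two, Real.cos_neg, pow_one] at h
  rw [wal1] at h
  have h2 : (∫ v in (-(π/2))..(π/2), Real.cos v ^ (1+2)) = 4/3 := by rw [h]; norm_num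
  exact h2

lemma wal5 : ∫ v in (-(π/2))..(π/2), Real.cos v ^ 5 = 16/15 := by
  have h := integral_cos_pow (a := -(π/2)) (b := π/2) 3
  simp only [Real.cos_pi_div_two, Real.cos_neg] at h
  rw [wal3] at h
  have h2 : (∫ v in (-(π/2))..(π/2), Real.cos v ^ (3+2)) = 16/15 := by rw [h]; norm_num
  exact h2

lemma wal7 : ∫ v in (-(π/2))..(π/2), Real.cos v ^ 7 = 32/35 := by
  have h := integral_cos_pow (a := -(π/2)) (b := π/2) 5
  simp only [Real.cos_pi_div_two, Real.cos_neg] at h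
  rw [wal5] at h
  have h2 : (∫ v in (-(π/2))..(π/2), Real.cos v ^ (5+2)) = 32/35 := by rw [h]; norm_num
  exact h2

lemma wal9 : ∫ v in (-(π/2))..(π/2), Real.cos v ^ 9 = 256/315 := by
  have h := integral_cos_pow (a := -(π/2)) (b := π/2) 7
  simp only [Real.cos_pi_div_two, Real.cos_neg] at h
  rw [wal7] at h
  have h2 : (∫ v in (-(π/2))..(π/2), Real.cos v ^ (7+2)) = 256/315 := by rw [h]; norm_num
  exact h2

lemma wal11 : ∫ v in (-(π/2))..(π/2), Real.cos v ^ 11 = 512/693 := by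
  have h := integral_cos_pow (a := -(π/2)) (b := π/2) 9
  simp only [Real.cos_pi_div_two, Real.cos_neg] at h
  rw [wal9] at h
  have h2 : (∫ v in (-(π/2))..(π/2), Real.cos v ^ (9+2)) = 512/693 := by rw [h]; norm_num
  exact h2

lemma wal13 : ∫ v in (-(π/2))..(π/2), Real.cos v ^ 13 = 2048/3003 := by
  have h := integral_cos_pow (a := -(π/2)) (b := π/2) 11
  simp only [Real.cos_pi_div_two, Real.cos_neg] at h
  rw [wal11] at h
  have h2 : (∫ v in (-(π/2))..(π/2), Real.cos v ^ (11+2)) = 2048/3003 := by rw [h]; norm_num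
  exact h2

lemma integral_comb (a b c d e f g : ℝ) :
    ∫ v in (-(π/2))..(π/2), (a * Real.cos v + b * Real.cos v^3 + c * Real.cos v^5
      + d * Real.cos v^7 + e * Real.cos v^9 + f * Real.cos v^11 + g * Real.cos v^13)
    = a*2 + b*(4/3) + c*(16/15) + d*(32/35) + e*(256/315) + f*(512/693) + g*(2048/3003) := by
  rw [intervalIntegral.integral_add (by apply Continuous.intervalIntegrable; fun_prop)
    (by apply Continuous.intervalIntegrable; fun_prop)]
  rw [intervalIntegral.integral_add (by apply Continuous.intervalIntegrable; fun_prop)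
    (by apply Continuous.intervalIntegrable; fun_prop)]
  rw [intervalIntegral.integral_add (by apply Continuous.intervalIntegrable; fun_prop)
    (by apply Continuous.intervalIntegrable; fun_prop)]
  rw [intervalIntegral.integral_add (by apply Continuous.intervalIntegrable; fun_prop)
    (by apply Continuous.intervalIntegrable; fun_prop)]
  rw [intervalIntegral.integral_add (by apply Continuous.intervalIntegrable; fun_prop)
    (by apply Continuous.intervalIntegrable; fun_prop)]
  rw [intervalIntegral.integral_add (by apply Continuous.intervalIntegrable; fun_prop)
    (by apply Continuous.intervalIntegrable; fun_prop)]
  simp only [intervalIntegral.integral_const_mul]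
  rw [wal1, wal3, wal5, wal7, wal9, wal11, wal13]

end Wallis

section Inner

open intervalIntegral MeasureTheory

lemma neg_pi_div_two_le : -(π/2) ≤ π/2 := by linarith [Real.pi_pos]

lemma inner_lo {τ : ℝ} (hτ : 0 ≤ τ) :
    2*τ^2 - 2*τ^4/9 + 2*τ^6/225 - 2*τ^8/11025 + 2*τ^10/893025 - 2*τ^12/108056025
      ≤ ∫ v in (-(π/2))..(π/2), τ * Real.sin (τ * Real.cos v) := by
  have key := integral_comb (τ^2) (-(τ^4/6)) (τ^6/120) (-(τ^8/5040)) (τ^10/362880)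
    (-(τ^12/39916800)) 0
  have mono : ∫ v in (-(π/2))..(π/2), (τ^2 * Real.cos v + (-(τ^4/6)) * Real.cos v^3
      + (τ^6/120) * Real.cos v^5 + (-(τ^8/5040)) * Real.cos v^7 + (τ^10/362880) * Real.cos v^9
      + (-(τ^12/39916800)) * Real.cos v^11 + (0:ℝ) * Real.cos v^13)
      ≤ ∫ v in (-(π/2))..(π/2), τ * Real.sin (τ * Real.cos v) := by
    apply intervalIntegral.integral_mono_on neg_pi_div_two_le
      (by apply Continuous.intervalIntegrable; fun_prop)
      (by apply Continuous.intervalIntegrable; fun_prop)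
    intro v hv
    have hc : 0 ≤ Real.cos v := Real.cos_nonneg_of_mem_Icc hv
    have h0 : 0 ≤ τ * Real.cos v := mul_nonneg hτ hc
    have hs := tay_s11 h0
    calc τ^2 * Real.cos v + (-(τ^4/6)) * Real.cos v^3 + (τ^6/120) * Real.cos v^5
        + (-(τ^8/5040)) * Real.cos v^7 + (τ^10/362880) * Real.cos v^9
        + (-(τ^12/39916800)) * Real.cos v^11 + (0:ℝ) * Real.cos v^13
        = τ * ((τ * Real.cos v) - (τ * Real.cos v)^3/6 + (τ * Real.cos v)^5/120
          - (τ * Real.cos v)^7/5040 + (τ * Real.cos v)^9/362880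
          - (τ * Real.cos v)^11/39916800) := by ring
      _ ≤ τ * Real.sin (τ * Real.cos v) := mul_le_mul_of_nonneg_left hs hτ
  rw [key] at mono
  linarith

lemma inner_hi {τ : ℝ} (hτ : 0 ≤ τ) :
    (∫ v in (-(π/2))..(π/2), τ * Real.sin (τ * Real.cos v))
      ≤ 2*τ^2 - 2*τ^4/9 + 2*τ^6/225 - 2*τ^8/11025 + 2*τ^10/893025 - 2*τ^12/108056025
        + 2*τ^14/18261468225 := by
  have key := integral_comb (τ^2) (-(τ^4/6)) (τ^6/120) (-(τ^8/5040)) (τ^10/362880)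
    (-(τ^12/39916800)) (τ^14/6227020800)
  have mono : (∫ v in (-(π/2))..(π/2), τ * Real.sin (τ * Real.cos v))
      ≤ ∫ v in (-(π/2))..(π/2), (τ^2 * Real.cos v + (-(τ^4/6)) * Real.cos v^3
      + (τ^6/120) * Real.cos v^5 + (-(τ^8/5040)) * Real.cos v^7 + (τ^10/362880) * Real.cos v^9
      + (-(τ^12/39916800)) * Real.cos v^11 + (τ^14/6227020800) * Real.cos v^13) := by
    apply intervalIntegral.integral_mono_on neg_pi_div_two_le
      (by apply Continuous.intervalIntegrable; fun_prop)
      (by apply Continuous.intervalIntegrable; fun_prop)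
    intro v hv
    have hc : 0 ≤ Real.cos v := Real.cos_nonneg_of_mem_Icc hv
    have h0 : 0 ≤ τ * Real.cos v := mul_nonneg hτ hc
    have hs := tay_s13 h0
    calc τ * Real.sin (τ * Real.cos v)
        ≤ τ * ((τ * Real.cos v) - (τ * Real.cos v)^3/6 + (τ * Real.cos v)^5/120
          - (τ * Real.cos v)^7/5040 + (τ * Real.cos v)^9/362880
          - (τ * Real.cos v)^11/39916800 + (τ * Real.cos v)^13/6227020800) :=
            mul_le_mul_of_nonneg_left hs hτ
      _ = τ^2 * Real.cos v + (-(τ^4/6)) * Real.cos v^3 + (τ^6/120) * Real.cos v^5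
        + (-(τ^8/5040)) * Real.cos v^7 + (τ^10/362880) * Real.cos v^9
        + (-(τ^12/39916800)) * Real.cos v^11 + (τ^14/6227020800) * Real.cos v^13 := by ring
  rw [key] at mono
  linarith

end Inner

section Main

open intervalIntegral MeasureTheory

set_option maxHeartbeats 1000000 in
/-- The volume of the ball of radius `R₄ = π/√3 ≈ 1.81379936` of the optimal multiply
transitive packing (equation (2.12) of the paper): `Vol(B(R₄)) ≈ 20.00238509`. -/
theorem ballVol_pi_div_sqrt_three_bounds :
    20.0023 < ballVol (π / Real.sqrt 3) ∧ ballVol (π / Real.sqrt 3) < 20.0024 := by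
  have hs3pos : (0:ℝ) < Real.sqrt 3 := Real.sqrt_pos.mpr (by norm_num)
  have hs3lo : (1.7320508075688772 : ℝ) < Real.sqrt 3 :=
    (Real.lt_sqrt (by norm_num)).mpr (by norm_num)
  have hs3hi : Real.sqrt 3 < (1.7320508075688773 : ℝ) :=
    (Real.sqrt_lt' (by norm_num)).mpr (by norm_num)
  have hπlo := Real.pi_gt_d20
  have hπhi := Real.pi_lt_d20
  set R := π / Real.sqrt 3 with hRdef
  have hRpos : 0 < R := div_pos Real.pi_pos hs3pos
  have hR1 : (1.81379936423421774 : ℝ) < R := by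
    rw [hRdef, lt_div_iff₀ hs3pos]
    nlinarith [hs3hi, hπlo]
  have hR2 : R < (1.81379936423421796 : ℝ) := by
    rw [hRdef, div_lt_iff₀ hs3pos]
    nlinarith [hs3lo, hπhi]
  -- continuity of the inner integral as a function of τ
  have hcontF : Continuous (fun τ : ℝ => ∫ v in (-(π/2))..(π/2),
      τ * Real.sin (τ * Real.cos v)) := by
    apply intervalIntegral.continuous_parametric_intervalIntegral_of_continuous'
    show Continuous fun p : ℝ × ℝ => p.1 * Real.sin (p.1 * Real.cos p.2)
    fun_prop
  -- lower bound for the outer integral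
  have hlo1 : (∫ τ in (0:ℝ)..R, (2*τ^2 - 2*τ^4/9 + 2*τ^6/225 - 2*τ^8/11025 + 2*τ^10/893025
      - 2*τ^12/108056025))
      ≤ ∫ τ in (0:ℝ)..R, ∫ v in (-(π/2))..(π/2), τ * Real.sin (τ * Real.cos v) := by
    apply intervalIntegral.integral_mono_on hRpos.le
      (by apply Continuous.intervalIntegrable; fun_prop)
      (hcontF.intervalIntegrable 0 R)
    exact fun τ hτ => inner_lo hτ.1
  have hhi1 : (∫ τ in (0:ℝ)..R, ∫ v in (-(π/2))..(π/2), τ * Real.sin (τ * Real.cos v))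
      ≤ ∫ τ in (0:ℝ)..R, (2*τ^2 - 2*τ^4/9 + 2*τ^6/225 - 2*τ^8/11025 + 2*τ^10/893025
      - 2*τ^12/108056025 + 2*τ^14/18261468225) := by
    apply intervalIntegral.integral_mono_on hRpos.le
      (hcontF.intervalIntegrable 0 R)
      (by apply Continuous.intervalIntegrable; fun_prop)
    exact fun τ hτ => inner_hi hτ.1
  -- evaluate the two polynomial integrals
  have hlo2 : (∫ τ in (0:ℝ)..R, (2*τ^2 - 2*τ^4/9 + 2*τ^6/225 - 2*τ^8/11025 + 2*τ^10/893025
      - 2*τ^12/108056025))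
      = 2*R^3/3 - 2*R^5/45 + 2*R^7/1575 - 2*R^9/99225 + 2*R^11/9823275
        - 2*R^13/1404728325 := by
    rw [ftc0 (F := fun y => 2*y^3/3 - 2*y^5/45 + 2*y^7/1575 - 2*y^9/99225 + 2*y^11/9823275
      - 2*y^13/1404728325) R (fun t => ?_) (by fun_prop)]
    · norm_num
    have h := ((((((hasDerivAt_pow 3 t).const_mul 2).div_const 3).sub
      (((hasDerivAt_pow 5 t).const_mul 2).div_const 45)).add
      (((hasDerivAt_pow 7 t).const_mul 2).div_const 1575)).sub
      (((hasDerivAt_pow 9 t).const_mul 2).div_const 99225)).add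
      (((hasDerivAt_pow 11 t).const_mul 2).div_const 9823275)
    have h2 := h.sub (((hasDerivAt_pow 13 t).const_mul 2).div_const 1404728325)
    exact h2.congr_deriv (by push_cast; norm_num; ring)
  have hhi2 : (∫ τ in (0:ℝ)..R, (2*τ^2 - 2*τ^4/9 + 2*τ^6/225 - 2*τ^8/11025 + 2*τ^10/893025
      - 2*τ^12/108056025 + 2*τ^14/18261468225))
      = 2*R^3/3 - 2*R^5/45 + 2*R^7/1575 - 2*R^9/99225 + 2*R^11/9823275
        - 2*R^13/1404728325 + 2*R^15/273922023375 := by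
    rw [ftc0 (F := fun y => 2*y^3/3 - 2*y^5/45 + 2*y^7/1575 - 2*y^9/99225 + 2*y^11/9823275
      - 2*y^13/1404728325 + 2*y^15/273922023375) R (fun t => ?_) (by fun_prop)]
    · norm_num
    have h := ((((((hasDerivAt_pow 3 t).const_mul 2).div_const 3).sub
      (((hasDerivAt_pow 5 t).const_mul 2).div_const 45)).add
      (((hasDerivAt_pow 7 t).const_mul 2).div_const 1575)).sub
      (((hasDerivAt_pow 9 t).const_mul 2).div_const 99225)).add
      (((hasDerivAt_pow 11 t).const_mul 2).div_const 9823275)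
    have h2 := (h.sub (((hasDerivAt_pow 13 t).const_mul 2).div_const 1404728325)).add
      (((hasDerivAt_pow 15 t).const_mul 2).div_const 273922023375)
    exact h2.congr_deriv (by push_cast; norm_num; ring)
  -- numeric bounds on powers of R
  have hRl : (0:ℝ) ≤ 1.81379936423421774 := by norm_num
  have p3l : (1.81379936423421774:ℝ)^3 < R^3 := by
    apply pow_lt_pow_left₀ hR1 hRl; norm_num
  have p3h : R^3 < (1.81379936423421796:ℝ)^3 := by
    apply pow_lt_pow_left₀ hR2 hRpos.le; norm_num
  have p5l : (1.81379936423421774:ℝ)^5 < R^5 := by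
    apply pow_lt_pow_left₀ hR1 hRl; norm_num
  have p5h : R^5 < (1.81379936423421796:ℝ)^5 := by
    apply pow_lt_pow_left₀ hR2 hRpos.le; norm_num
  have p7l : (1.81379936423421774:ℝ)^7 < R^7 := by
    apply pow_lt_pow_left₀ hR1 hRl; norm_num
  have p7h : R^7 < (1.81379936423421796:ℝ)^7 := by
    apply pow_lt_pow_left₀ hR2 hRpos.le; norm_num
  have p9l : (1.81379936423421774:ℝ)^9 < R^9 := by
    apply pow_lt_pow_left₀ hR1 hRl; norm_num
  have p9h : R^9 < (1.81379936423421796:ℝ)^9 := by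
    apply pow_lt_pow_left₀ hR2 hRpos.le; norm_num
  have p11l : (1.81379936423421774:ℝ)^11 < R^11 := by
    apply pow_lt_pow_left₀ hR1 hRl; norm_num
  have p11h : R^11 < (1.81379936423421796:ℝ)^11 := by
    apply pow_lt_pow_left₀ hR2 hRpos.le; norm_num
  have p13l : (1.81379936423421774:ℝ)^13 < R^13 := by
    apply pow_lt_pow_left₀ hR1 hRl; norm_num
  have p13h : R^13 < (1.81379936423421796:ℝ)^13 := by
    apply pow_lt_pow_left₀ hR2 hRpos.le; norm_num
  have p15h : R^15 < (1.81379936423421796:ℝ)^15 := by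
    apply pow_lt_pow_left₀ hR2 hRpos.le; norm_num
  -- bounds on the evaluated polynomials
  have hGlo : (3.18347840:ℝ) < 2*R^3/3 - 2*R^5/45 + 2*R^7/1575 - 2*R^9/99225 + 2*R^11/9823275
      - 2*R^13/1404728325 := by
    linarith [p3l, p5h, p7l, p9h, p11l, p13h]
  have hGhi : 2*R^3/3 - 2*R^5/45 + 2*R^7/1575 - 2*R^9/99225 + 2*R^11/9823275
      - 2*R^13/1404728325 + 2*R^15/273922023375 < (3.18347847:ℝ) := by
    linarith [p3h, p5l, p7h, p9l, p11h, p13l, p15h]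
  -- assemble
  have hIlo : (3.18347840:ℝ) < ∫ τ in (0:ℝ)..R, ∫ v in (-(π/2))..(π/2),
      τ * Real.sin (τ * Real.cos v) := by
    rw [hlo2] at hlo1; linarith
  have hIhi : (∫ τ in (0:ℝ)..R, ∫ v in (-(π/2))..(π/2), τ * Real.sin (τ * Real.cos v))
      < (3.18347847:ℝ) := by
    rw [hhi2] at hhi1; linarith
  have hunfold : ballVol R = 2 * π * ∫ τ in (0:ℝ)..R, ∫ v in (-(π/2))..(π/2),
      τ * Real.sin (τ * Real.cos v) := rfl
  constructor
  · rw [hunfold]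
    calc (20.0023:ℝ) < 2*3.14159265358979323846*3.18347840 := by norm_num
      _ ≤ 2*π*3.18347840 := by linarith
      _ < 2*π*(∫ τ in (0:ℝ)..R, ∫ v in (-(π/2))..(π/2), τ * Real.sin (τ * Real.cos v)) := by
          have := mul_lt_mul_of_pos_left hIlo (show (0:ℝ) < 2*π by positivity)
          linarith
  · rw [hunfold]
    calc 2*π*(∫ τ in (0:ℝ)..R, ∫ v in (-(π/2))..(π/2), τ * Real.sin (τ * Real.cos v))
        < 2*π*3.18347847 := by
          have := mul_lt_mul_of_pos_left hIhi (show (0:ℝ) < 2*π by positivity)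
          linarith
      _ ≤ 2*3.14159265358979323847*3.18347847 := by nlinarith [hπhi]
      _ < 20.0024 := by norm_num
end Main
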